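/- Let (a_k)_{k=0}^n be real numbers and let λ_1 ≤ λ_2 ≤ ... ≤ λ_n be defined by λ_k = a_{k−1} − a_k (assuming (a_k) is concave so that the λ_k are non-decreasing). Then for every x ∈ ℝ, max_{0 ≤ k ≤ n}(a_k + kx) = a_n + Σ_{j=1}^n max(x, λ_j). -/

import Mathlib

lemma stmt13_chain (f : ℕ → ℝ) (n : ℕ)
    (H : ∀ k, 1 ≤ k → k < n → f k ≤ f (k + 1)) :
    ∀ j, 1 ≤ j → j ≤ n → f j ≤ f n := by
  induction n with
  | zero => intro j h1 h2; omega
  | succ m ih =>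
    intro j h1 h2
    rcases Nat.eq_or_lt_of_le h2 with h | h
    · simp [h]
    · have hjm : j ≤ m := by omega
      have hm1 : 1 ≤ m := by omega
      have := ih (fun k hk hk' => H k hk (by omega)) j h1 hjm
      exact this.trans (H m hm1 (by omega))

lemma stmt13_aux (n : ℕ) (a : ℕ → ℝ) (x : ℝ)
    (H : ∀ k, 1 ≤ k → k < n → a (k - 1) - a k ≤ a k - a (k + 1)) :
    (Finset.range (n + 1)).sup' (by simp) (fun k => a k + (k : ℝ) * x)
      = a n + ∑ j ∈ Finset.Icc 1 n, max x (a (j - 1) - a j) := by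
  induction n with
  | zero => simp
  | succ m ih =>
    have Hm : ∀ k, 1 ≤ k → k < m → a (k - 1) - a k ≤ a k - a (k + 1) :=
      fun k hk hk' => H k hk (by omega)
    have hins : Finset.range (m + 2) = insert (m + 1) (Finset.range (m + 1)) := by
      rw [Finset.range_add_one]
    rw [Finset.sup'_congr (by simp) hins (fun _ _ => rfl), Finset.sup'_insert (H := by simp), ih Hm]
    have hIcc : Finset.Icc 1 (m + 1) = insert (m + 1) (Finset.Icc 1 m) := by
      ext k; simp [Finset.mem_Icc]; omega
    rw [hIcc, Finset.sum_insert (by simp)]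
    set S := ∑ j ∈ Finset.Icc 1 m, max x (a (j - 1) - a j) with hS
    have hlam : ∀ j, 1 ≤ j → j ≤ m + 1 → a (j - 1) - a j ≤ a m - a (m + 1) := by
      intro j h1 h2
      have := stmt13_chain (fun j => a (j - 1) - a j) (m + 1) (by
        intro k hk hk'
        have := H k hk (by omega)
        simpa using this) j h1 h2
      simpa using this
    have hxS : (m : ℝ) * x ≤ S := by
      have : ∀ j ∈ Finset.Icc 1 m, x ≤ max x (a (j - 1) - a j) :=
        fun j _ => le_max_left _ _
      calc (m : ℝ) * x = ∑ _j ∈ Finset.Icc 1 m, x := by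
            simp [mul_comm]
        _ ≤ S := Finset.sum_le_sum this
    simp only [Nat.add_sub_cancel]
    rcases le_total (a m - a (m + 1)) x with hx | hx
    · -- x ≥ λ_{m+1}: S = m * x
      have hSx : S = (m : ℝ) * x := by
        rw [hS]
        have : ∀ j ∈ Finset.Icc 1 m, max x (a (j - 1) - a j) = x := by
          intro j hj
          have hj' := Finset.mem_Icc.mp hj
          exact max_eq_left ((hlam j hj'.1 (by omega)).trans hx)
        rw [Finset.sum_congr rfl this]
        rw [Finset.sum_const, Nat.card_Icc]
        simp [mul_comm]
      rw [hSx, max_eq_left hx,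
        max_eq_left (by push_cast; nlinarith)]
      push_cast; ring
    · -- x ≤ λ_{m+1}
      have h1 : a (m + 1) + ((m : ℝ) + 1) * x ≤ a m + S := by nlinarith
      rw [max_eq_right hx,
        max_eq_right (by push_cast; linarith)]
      ring

theorem stmt13 (n : ℕ) (a : ℕ → ℝ)
    (hconc : ∀ k, 1 ≤ k → k ≤ n - 1 → (a (k - 1) + a (k + 1)) / 2 ≤ a k) :
    ∀ x : ℝ, (⨆ k : Fin (n + 1), (a k + ((k : ℕ) : ℝ) * x)) =
      a n + ∑ j ∈ Finset.Icc 1 n, max x (a (j - 1) - a j) := by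
  intro x
  have H : ∀ k, 1 ≤ k → k < n → a (k - 1) - a k ≤ a k - a (k + 1) := by
    intro k hk hk'
    have := hconc k hk (by omega)
    linarith
  rw [← stmt13_aux n a x H]
  rw [← Finset.sup'_univ_eq_ciSup]
  have hset : Finset.range (n + 1) = (Finset.univ : Finset (Fin (n+1))).map Fin.valEmbedding := by
    rw [Fin.map_valEmbedding_univ]
    ext k
    simp
  rw [Finset.sup'_congr (by simp) hset (fun _ _ => rfl),
    Finset.sup'_map (fun k : ℕ => a k + (k : ℝ) * x) (by simp)]
  rfl
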